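/- arXiv:2605.05341 — 2 statements merged into one kernel-verified Lean document; each statement's English description precedes it below -/
import Mathlib

section
/- Let h†(x) denote the unique minimizer over the nonnegative orthant of h ↦ (1/2)‖x − D h‖² + λ₁ Σᵢ wᵢ |hᵢ| + λ₂ ‖h‖², with fixed weights wᵢ ≥ 0 and λ₂ > 0. Then the map x ↦ h†(x) is Lipschitz continuous with constant at most 1/(2√(2λ₂)): ‖h†(x₁) − h†(x₂)‖ ≤ ‖x₁ − x₂‖ / (2√(2λ₂)). -/
open Matrix RealInnerProductSpace

lemma elastic_key {d n : ℕ} (D : Matrix (Fin d) (Fin n) ℝ)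
    (lam1 lam2 : ℝ) (hlam1 : 0 ≤ lam1) (hlam2 : 0 < lam2)
    (w : Fin n → ℝ) (hw : ∀ i, 0 ≤ w i)
    (x : EuclideanSpace ℝ (Fin d)) (h y : EuclideanSpace ℝ (Fin n))
    (hy : ∀ i, 0 ≤ y i) (hh : ∀ i, 0 ≤ h i)
    (hmin : IsMinOn (fun h : EuclideanSpace ℝ (Fin n) =>
          (1 / 2) * ‖x - (show EuclideanSpace ℝ (Fin d) from WithLp.toLp 2 (D.mulVec h))‖ ^ 2
            + lam1 * ∑ i, w i * |h i| + lam2 * ‖h‖ ^ 2)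
        {h : EuclideanSpace ℝ (Fin n) | ∀ i, 0 ≤ h i} h) :
    0 ≤ -⟪x - Matrix.toEuclideanLin D h, Matrix.toEuclideanLin D (y - h)⟫
        + 2 * lam2 * ⟪h, y - h⟫
        + lam1 * ((∑ i, w i * |y i|) - ∑ i, w i * |h i|) := by
  set T := Matrix.toEuclideanLin D with hT
  have hming : IsMinOn (fun h : EuclideanSpace ℝ (Fin n) =>
      (1 / 2) * ‖x - T h‖ ^ 2 + lam1 * ∑ i, w i * |h i| + lam2 * ‖h‖ ^ 2)
      {h : EuclideanSpace ℝ (Fin n) | ∀ i, 0 ≤ h i} h := hmin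
  set Δ := y - h with hΔ
  set A : ℝ := -⟪x - T h, T Δ⟫ + 2 * lam2 * ⟪h, Δ⟫
      + lam1 * ((∑ i, w i * |y i|) - ∑ i, w i * |h i|) with hA
  set B : ℝ := (1/2) * ‖T Δ‖ ^ 2 + lam2 * ‖Δ‖ ^ 2 with hB
  have hBnn : 0 ≤ B := by positivity
  have main : ∀ t : ℝ, 0 < t → t ≤ 1 → 0 ≤ A + t * B := by
    intro t ht ht1
    have happ : ∀ i, (h + t • Δ) i = (1 - t) * h i + t * y i := by
      intro i
      simp [hΔ, smul_eq_mul]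
      ring
    have hfeas : (h + t • Δ) ∈ {h : EuclideanSpace ℝ (Fin n) | ∀ i, 0 ≤ h i} := by
      intro i
      rw [happ i]
      have := hh i; have := hy i
      nlinarith
    have hle := isMinOn_iff.mp hming _ hfeas
    simp only [] at hle
    have eT : T (h + t • Δ) = T h + t • T Δ := by
      rw [map_add, LinearMap.map_smul]
    rw [eT] at hle
    have e1 : x - (T h + t • T Δ) = (x - T h) - t • T Δ := by abel
    rw [e1] at hle
    have n1 : ‖(x - T h) - t • T Δ‖ ^ 2
        = ‖x - T h‖ ^ 2 - 2 * (t * ⟪x - T h, T Δ⟫) + t ^ 2 * ‖T Δ‖ ^ 2 := by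
      rw [norm_sub_sq_real, real_inner_smul_right, norm_smul]
      rw [mul_pow, Real.norm_eq_abs, sq_abs]
    have n2 : ‖h + t • Δ‖ ^ 2 = ‖h‖ ^ 2 + 2 * (t * ⟪h, Δ⟫) + t ^ 2 * ‖Δ‖ ^ 2 := by
      rw [norm_add_sq_real, real_inner_smul_right, norm_smul]
      rw [mul_pow, Real.norm_eq_abs, sq_abs]
    have n3 : ∑ i, w i * |(h + t • Δ) i|
        ≤ (1 - t) * ∑ i, w i * |h i| + t * ∑ i, w i * |y i| := by
      rw [Finset.mul_sum, Finset.mul_sum, ← Finset.sum_add_distrib]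
      apply Finset.sum_le_sum
      intro i _
      rw [happ i]
      have habs : |(1 - t) * h i + t * y i| ≤ (1 - t) * |h i| + t * |y i| := by
        calc |(1 - t) * h i + t * y i| ≤ |(1 - t) * h i| + |t * y i| := abs_add_le _ _
          _ = (1 - t) * |h i| + t * |y i| := by
              rw [abs_mul, abs_mul, abs_of_nonneg (by linarith : (0:ℝ) ≤ 1 - t),
                abs_of_nonneg ht.le]
      calc w i * |(1 - t) * h i + t * y i| ≤ w i * ((1 - t) * |h i| + t * |y i|) :=
            mul_le_mul_of_nonneg_left habs (hw i)
        _ = (1 - t) * (w i * |h i|) + t * (w i * |y i|) := by ring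
    rw [n1, n2] at hle
    have hl1 : lam1 * ∑ i, w i * |(h + t • Δ) i|
        ≤ lam1 * ((1 - t) * ∑ i, w i * |h i| + t * ∑ i, w i * |y i|) :=
      mul_le_mul_of_nonneg_left n3 hlam1
    have step : 0 ≤ t * (A + t * B) := by
      have expand : t * (A + t * B)
          = ((1 / 2) * (‖x - T h‖ ^ 2 - 2 * (t * ⟪x - T h, T Δ⟫) + t ^ 2 * ‖T Δ‖ ^ 2)
              + lam1 * ((1 - t) * ∑ i, w i * |h i| + t * ∑ i, w i * |y i|)
              + lam2 * (‖h‖ ^ 2 + 2 * (t * ⟪h, Δ⟫) + t ^ 2 * ‖Δ‖ ^ 2))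
            - ((1 / 2) * ‖x - T h‖ ^ 2 + lam1 * ∑ i, w i * |h i| + lam2 * ‖h‖ ^ 2) := by
        rw [hA, hB]; ring
      rw [expand]
      linarith [hle, hl1]
    exact (mul_nonneg_iff_of_pos_left ht).mp step
  by_contra hcon
  push_neg at hcon
  have hAneg : A < 0 := hcon
  have hBp : (0:ℝ) < B + 1 := by linarith
  set t₀ : ℝ := min 1 (-A / (2 * (B + 1))) with ht₀
  have ht₀pos : 0 < t₀ := lt_min one_pos (div_pos (by linarith) (by linarith))
  have ht₀1 : t₀ ≤ 1 := min_le_left _ _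
  have hmain := main t₀ ht₀pos ht₀1
  have h2 : t₀ ≤ -A / (2 * (B + 1)) := min_le_right _ _
  have h3 : t₀ * (B + 1) ≤ -A / 2 := by
    calc t₀ * (B + 1) ≤ (-A / (2 * (B + 1))) * (B + 1) :=
          mul_le_mul_of_nonneg_right h2 (by linarith)
      _ = -A / 2 := by field_simp
  have h4 : t₀ * B ≤ t₀ * (B + 1) := by nlinarith
  clear_value t₀ A B
  linarith

set_option maxHeartbeats 1000000 in
/-- Lipschitz stability of the elastic-net solution map: the minimizer `h†(x)` of
`(1/2)‖x − Dh‖² + λ₁ Σᵢ wᵢ|hᵢ| + λ₂‖h‖²` over the nonnegative orthant is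
Lipschitz in `x` with constant `1/(2√(2λ₂))`. -/
theorem stmt_2 {d n : ℕ} (D : Matrix (Fin d) (Fin n) ℝ)
    (lam1 lam2 : ℝ) (hlam1 : 0 ≤ lam1) (hlam2 : 0 < lam2)
    (w : Fin n → ℝ) (hw : ∀ i, 0 ≤ w i)
    (hdag : EuclideanSpace ℝ (Fin d) → EuclideanSpace ℝ (Fin n))
    (hmem : ∀ x, ∀ i, 0 ≤ hdag x i)
    (hmin : ∀ x : EuclideanSpace ℝ (Fin d),
      IsMinOn (fun h : EuclideanSpace ℝ (Fin n) =>
          (1 / 2) * ‖x - (show EuclideanSpace ℝ (Fin d) from WithLp.toLp 2 (D.mulVec h))‖ ^ 2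
            + lam1 * ∑ i, w i * |h i| + lam2 * ‖h‖ ^ 2)
        {h : EuclideanSpace ℝ (Fin n) | ∀ i, 0 ≤ h i} (hdag x)) :
    ∀ x₁ x₂ : EuclideanSpace ℝ (Fin d),
      ‖hdag x₁ - hdag x₂‖ ≤ ‖x₁ - x₂‖ / (2 * Real.sqrt (2 * lam2)) := by
  intro x₁ x₂
  set T := Matrix.toEuclideanLin D with hT
  set h₁ := hdag x₁ with hh₁
  set h₂ := hdag x₂ with hh₂
  have k1 := elastic_key D lam1 lam2 hlam1 hlam2 w hw x₁ h₁ h₂ (hmem x₂) (hmem x₁) (hmin x₁)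
  have k2 := elastic_key D lam1 lam2 hlam1 hlam2 w hw x₂ h₂ h₁ (hmem x₁) (hmem x₂) (hmin x₂)
  rw [← hT] at k1 k2
  set u := h₂ - h₁ with hu
  set v := T u with hv
  have e2 : h₁ - h₂ = -u := by rw [hu]; abel
  have e3 : T (h₁ - h₂) = -v := by rw [e2, map_neg]
  rw [e3, e2] at k2
  simp only [inner_neg_right, neg_neg] at k2
  have i1 : ⟪x₂ - T h₂, v⟫ - ⟪x₁ - T h₁, v⟫ = ⟪x₂ - x₁, v⟫ - ‖v‖ ^ 2 := by
    rw [← inner_sub_left]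
    have e4 : (x₂ - T h₂) - (x₁ - T h₁) = (x₂ - x₁) - v := by
      have : v = T h₂ - T h₁ := by rw [hv, hu, map_sub]
      rw [this]; abel
    rw [e4, inner_sub_left, real_inner_self_eq_norm_sq]
  have i2 : ⟪h₁, u⟫ - ⟪h₂, u⟫ = -‖u‖ ^ 2 := by
    rw [← inner_sub_left, e2, inner_neg_left, real_inner_self_eq_norm_sq]
  have i2' : 2 * lam2 * (⟪h₁, u⟫ - ⟪h₂, u⟫) = 2 * lam2 * (-‖u‖ ^ 2) := by rw [i2]
  clear_value T h₁ h₂ u v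
  have big : 2 * lam2 * ‖u‖ ^ 2 + ‖v‖ ^ 2 ≤ ⟪x₂ - x₁, v⟫ := by
    linarith [k1, k2, i1, i2']
  have cs : ⟪x₂ - x₁, v⟫ ≤ ‖x₂ - x₁‖ * ‖v‖ := real_inner_le_norm _ _
  have hnrev : ‖x₂ - x₁‖ = ‖x₁ - x₂‖ := norm_sub_rev _ _
  set s := ‖x₁ - x₂‖ with hs
  have hs0 : 0 ≤ s := norm_nonneg _
  have hq : 8 * lam2 * ‖u‖ ^ 2 ≤ s ^ 2 := by
    nlinarith [sq_nonneg (s - 2 * ‖v‖), norm_nonneg v, norm_nonneg u, hlam2, big, cs]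
  have hnu : ‖h₁ - h₂‖ = ‖u‖ := by rw [hu, norm_sub_rev]
  set r := Real.sqrt (2 * lam2) with hr
  have hr2 : r ^ 2 = 2 * lam2 := Real.sq_sqrt (by linarith)
  have hrpos : 0 < r := Real.sqrt_pos.mpr (by linarith)
  clear_value s r
  rw [hnu, le_div_iff₀ (by positivity : (0:ℝ) < 2 * r)]
  have hsq : (‖u‖ * (2 * r)) ^ 2 ≤ s ^ 2 := by
    rw [mul_pow, mul_pow, hr2]
    nlinarith [hq]
  have := Real.sqrt_le_sqrt hsq
  rwa [Real.sqrt_sq (by positivity), Real.sqrt_sq hs0] at this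
end

section
/- Let (F_t) be a sequence of convex functions on R^n of the form F_t(h) = Q(h) + Σᵢ c_{t,i} hᵢ + χ_{h ≥ 0}(h), where Q is continuous and strongly convex, c_{t,i} → 0 for i in a set A, and c_{t,i} → ∞ for i ∉ A. Let h_t be a minimizer of F_t, assumed to lie in a fixed compact set. Then h_t converges to the unique minimizer h* of Q over {h ≥ 0 : hᵢ = 0 for all i ∉ A}. -/
open Filter

set_option maxHeartbeats 1000000 in
/-- Convergence of penalized minimizers to the oracle solution: if
`F_t(h) = Q(h) + Σᵢ c_{t,i} hᵢ` on the nonnegative orthant with `Q` continuous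
and strongly convex, `c_{t,i} → 0` on `A` and `c_{t,i} → ∞` off `A`, and the
minimizers `h_t` stay in a compact set, then `h_t` converges to the unique
minimizer of `Q` over `{h ≥ 0 : hᵢ = 0 for i ∉ A}`. -/
theorem stmt_8 {n : ℕ} (Q : EuclideanSpace ℝ (Fin n) → ℝ)
    (μ : ℝ) (hμ : 0 < μ)
    (hQstrong : ConvexOn ℝ Set.univ (fun h => Q h - μ / 2 * ‖h‖ ^ 2))
    (hQcont : Continuous Q)
    (A : Set (Fin n)) (c : ℕ → Fin n → ℝ) (hc_nonneg : ∀ t i, 0 ≤ c t i)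
    (hcA : ∀ i ∈ A, Tendsto (fun t => c t i) atTop (nhds 0))
    (hcAc : ∀ i ∉ A, Tendsto (fun t => c t i) atTop atTop)
    (hseq : ℕ → EuclideanSpace ℝ (Fin n))
    (hseq_nonneg : ∀ t i, 0 ≤ hseq t i)
    (hseq_min : ∀ t, IsMinOn (fun h : EuclideanSpace ℝ (Fin n) => Q h + ∑ i, c t i * h i)
      {h : EuclideanSpace ℝ (Fin n) | ∀ i, 0 ≤ h i} (hseq t))
    (K : Set (EuclideanSpace ℝ (Fin n))) (hK : IsCompact K) (hseqK : ∀ t, hseq t ∈ K)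
    (hstar : EuclideanSpace ℝ (Fin n))
    (hstar_mem : hstar ∈ {h : EuclideanSpace ℝ (Fin n) | (∀ i, 0 ≤ h i) ∧ ∀ i ∉ A, h i = 0})
    (hstar_min : IsMinOn Q
      {h : EuclideanSpace ℝ (Fin n) | (∀ i, 0 ≤ h i) ∧ ∀ i ∉ A, h i = 0} hstar) :
    Tendsto hseq atTop (nhds hstar) := by
  obtain ⟨hstar_nonneg, hstar_zero⟩ := hstar_mem
  -- the penalty at hstar tends to 0
  set ε : ℕ → ℝ := fun t => ∑ i, c t i * hstar i with hε
  have hε0 : Tendsto ε atTop (nhds 0) := by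
    have : Tendsto (fun t => ∑ i, c t i * hstar i) atTop
        (nhds (∑ _i : Fin n, (0 : ℝ))) := by
      refine tendsto_finset_sum _ fun i _ => ?_
      by_cases hi : i ∈ A
      · simpa using (hcA i hi).mul_const (hstar i)
      · simp [hstar_zero i hi]
    simpa using this
  -- the key minimization inequality
  have keymin : ∀ t, Q (hseq t) + ∑ i, c t i * hseq t i ≤ Q hstar + ε t := fun t =>
    isMinOn_iff.mp (hseq_min t) hstar hstar_nonneg
  have snn : ∀ t, 0 ≤ ∑ i, c t i * hseq t i := fun t =>
    Finset.sum_nonneg fun i _ => mul_nonneg (hc_nonneg t i) (hseq_nonneg t i)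
  -- Q is bounded below on K
  obtain ⟨z, hzK, hzmin⟩ := hK.exists_isMinOn ⟨hseq 0, hseqK 0⟩ hQcont.continuousOn
  have hz : ∀ t, Q z ≤ Q (hseq t) := fun t => isMinOn_iff.mp hzmin _ (hseqK t)
  -- coordinates off A tend to 0
  have hoffA : ∀ i ∉ A, Tendsto (fun t => hseq t i) atTop (nhds 0) := by
    intro i hi
    have hnum : Tendsto (fun t => Q hstar + ε t - Q z) atTop (nhds (Q hstar + 0 - Q z)) :=
      (tendsto_const_nhds.add hε0).sub tendsto_const_nhds
    have hdiv : Tendsto (fun t => (Q hstar + ε t - Q z) / c t i) atTop (nhds 0) :=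
      hnum.div_atTop (hcAc i hi)
    refine squeeze_zero' (Eventually.of_forall fun t => hseq_nonneg t i) ?_ hdiv
    filter_upwards [(hcAc i hi).eventually_gt_atTop 0] with t hct
    rw [le_div_iff₀ hct]
    have h1 : c t i * hseq t i ≤ ∑ j, c t j * hseq t j :=
      Finset.single_le_sum (f := fun j => c t j * hseq t j)
        (fun j _ => mul_nonneg (hc_nonneg t j) (hseq_nonneg t j)) (Finset.mem_univ i)
    have := keymin t
    have := hz t
    nlinarith [h1]
  -- value bound
  have hval : ∀ t, Q (hseq t) ≤ Q hstar + ε t := fun t => by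
    have := keymin t; have := snn t; linarith
  -- uniqueness of the minimizer by strong convexity
  have uniq : ∀ y : EuclideanSpace ℝ (Fin n), (∀ i, 0 ≤ y i) → (∀ i ∉ A, y i = 0) →
      Q y ≤ Q hstar → y = hstar := by
    intro y hy1 hy2 hyQ
    have hQy : Q hstar ≤ Q y := isMinOn_iff.mp hstar_min y ⟨hy1, hy2⟩
    set m : EuclideanSpace ℝ (Fin n) := (1/2 : ℝ) • y + (1/2 : ℝ) • hstar with hm
    have hmS : m ∈ {h : EuclideanSpace ℝ (Fin n) | (∀ i, 0 ≤ h i) ∧ ∀ i ∉ A, h i = 0} := by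
      constructor
      · intro i
        have : m i = (1/2 : ℝ) * y i + (1/2 : ℝ) * hstar i := rfl
        rw [this]
        have := hy1 i; have := hstar_nonneg i; linarith
      · intro i hi
        have : m i = (1/2 : ℝ) * y i + (1/2 : ℝ) * hstar i := rfl
        rw [this, hy2 i hi, hstar_zero i hi]; ring
    have hQm : Q hstar ≤ Q m := isMinOn_iff.mp hstar_min m hmS
    have hconv := hQstrong.2 (Set.mem_univ y) (Set.mem_univ hstar)
      (by norm_num : (0:ℝ) ≤ 1/2) (by norm_num : (0:ℝ) ≤ 1/2) (by norm_num : (1:ℝ)/2 + 1/2 = 1)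
    simp only [smul_eq_mul] at hconv
    have hmnorm : ‖m‖ = (1/2 : ℝ) * ‖y + hstar‖ := by
      rw [hm, ← smul_add, norm_smul]
      simp
    rw [← hm] at hconv
    have hpar := parallelogram_law_with_norm ℝ y hstar
    have hpar' : ‖y + hstar‖ ^ 2 + ‖y - hstar‖ ^ 2 = 2 * ‖y‖ ^ 2 + 2 * ‖hstar‖ ^ 2 := by
      simp only [pow_two]; linarith [hpar]
    have hm2 : ‖m‖ ^ 2 = 1 / 4 * ‖y + hstar‖ ^ 2 := by rw [hmnorm]; ring
    have hm2' : μ * ‖m‖ ^ 2 = μ * (1 / 4 * ‖y + hstar‖ ^ 2) := by rw [hm2]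
    have hpar'' : μ * (‖y + hstar‖ ^ 2 + ‖y - hstar‖ ^ 2) =
        μ * (2 * ‖y‖ ^ 2 + 2 * ‖hstar‖ ^ 2) := by rw [hpar']
    have key : μ * ‖y - hstar‖ ^ 2 ≤ 0 := by nlinarith [hconv, hQm, hyQ, hQy, hm2', hpar'']
    have hns : ‖y - hstar‖ ^ 2 ≤ 0 := by
      by_contra h
      push_neg at h
      nlinarith [mul_pos hμ h]
    have : y - hstar = 0 := by
      have h0 : ‖y - hstar‖ = 0 := by nlinarith [norm_nonneg (y - hstar)]
      exact norm_eq_zero.mp h0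
    exact sub_eq_zero.mp this
  -- main argument via subsequences
  refine tendsto_of_subseq_tendsto fun ns hns => ?_
  obtain ⟨y, hyK, φ, hφ, hconv⟩ := hK.tendsto_subseq (x := hseq ∘ ns) fun k => hseqK (ns k)
  refine ⟨φ, ?_⟩
  have htop : Tendsto (fun k => ns (φ k)) atTop atTop := hns.comp hφ.tendsto_atTop
  have hcoord : ∀ i, Tendsto (fun k => hseq (ns (φ k)) i) atTop (nhds (y i)) := by
    intro i
    exact ((EuclideanSpace.proj i).continuous.tendsto y).comp hconv
  have hy1 : ∀ i, 0 ≤ y i := fun i =>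
    ge_of_tendsto' (hcoord i) fun k => hseq_nonneg (ns (φ k)) i
  have hy2 : ∀ i ∉ A, y i = 0 := by
    intro i hi
    exact tendsto_nhds_unique (hcoord i) ((hoffA i hi).comp htop)
  have hyQ : Q y ≤ Q hstar := by
    have hQconv : Tendsto (fun k => Q (hseq (ns (φ k)))) atTop (nhds (Q y)) :=
      (hQcont.tendsto y).comp hconv
    have hrhs : Tendsto (fun k => Q hstar + ε (ns (φ k))) atTop (nhds (Q hstar + 0)) :=
      tendsto_const_nhds.add (hε0.comp htop)
    have := le_of_tendsto_of_tendsto' hQconv hrhs fun k => hval (ns (φ k))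
    simpa using this
  have hyeq : y = hstar := uniq y hy1 hy2 hyQ
  simpa [hyeq, Function.comp_def] using hconv
end
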